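/- For the outer billiard map T outside a regular octagon γ, the reflected octagons γ^i satisfy T(γ^i) = γ^{(i+3) mod 8} for all i ∈ {0,…,7}. -/

import Mathlib

open Real

/-- The vertices of the regular octagon. -/
noncomputable def octVertex (i : Fin 8) : ℝ × ℝ :=
  (Real.cos ((2 * (i : ℕ) + 1) * π / 8), Real.sin ((2 * (i : ℕ) + 1) * π / 8))

/-- The regular octagon `γ`. -/
noncomputable def octagon : Set (ℝ × ℝ) := convexHull ℝ (Set.range octVertex)

/-- The line through the vertices `A_i` and `A_{i+1}`. -/
noncomputable def octLine (i : Fin 8) : Set (ℝ × ℝ) :=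
  (affineSpan ℝ {octVertex i, octVertex (i + 1)} : AffineSubspace ℝ (ℝ × ℝ))

/-- The planar cross product. -/
def det2 (u v : ℝ × ℝ) : ℝ := u.1 * v.2 - u.2 * v.1

/-- The open region of points outside the octagon whose right tangent line to the
octagon touches it exactly at the vertex `A_j`. -/
noncomputable def tangentRegion (j : Fin 8) : Set (ℝ × ℝ) :=
  {p | p ∉ octagon ∧ ∀ q ∈ octagon, q ≠ octVertex j →
        0 < det2 (octVertex j - p) (q - p)}

/-! ### Auxiliary material -/

noncomputable def cc : ℝ := √(2 + √2) / 2
noncomputable def ss : ℝ := √(2 - √2) / 2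

lemma sqrt2_sq : √2 ^ 2 = 2 := Real.sq_sqrt (by norm_num)
lemma sqrt2_gt : 1.414 < √2 := by nlinarith [sqrt2_sq, Real.sqrt_nonneg 2]
lemma sqrt2_lt : √2 < 1.415 := by nlinarith [sqrt2_sq, Real.sqrt_nonneg 2]
lemma cc_sq : cc ^ 2 = (2 + √2) / 4 := by
  rw [cc, div_pow, Real.sq_sqrt (by positivity)]; norm_num
lemma ss_sq : ss ^ 2 = (2 - √2) / 4 := by
  rw [ss, div_pow, Real.sq_sqrt (by nlinarith [sqrt2_lt])]; norm_num
lemma hone : cc ^ 2 + ss ^ 2 = 1 := by rw [cc_sq, ss_sq]; ring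
lemma ccss : cc * ss = √2 / 4 := by
  rw [cc, ss, div_mul_div_comm, ← Real.sqrt_mul (by positivity),
    show (2 + √2) * (2 - √2) = 2 by nlinarith [sqrt2_sq]]
  norm_num
lemma hX : cc ^ 2 - ss ^ 2 = √2 / 2 := by rw [cc_sq, ss_sq]; ring
lemma htwo : cc ^ 2 - ss ^ 2 = 2 * (cc * ss) := by rw [hX, ccss]; ring
lemma hXlo : 0.707 < cc ^ 2 - ss ^ 2 := by rw [hX]; nlinarith [sqrt2_gt]
lemma hXhi : cc ^ 2 - ss ^ 2 < 0.7075 := by rw [hX]; nlinarith [sqrt2_lt]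
lemma cc_pos : 0 < cc := by rw [cc]; positivity
lemma ss_pos : 0 < ss := by
  rw [ss]; apply div_pos _ (by norm_num); exact Real.sqrt_pos.mpr (by nlinarith [sqrt2_lt])
lemma ss_lt_cc : ss < cc := by
  nlinarith [cc_sq, ss_sq, cc_pos, ss_pos, sqrt2_gt]

noncomputable def V : Fin 8 → ℝ × ℝ
  | 0 => (cc,ss) | 1 => (ss,cc) | 2 => (-ss,cc) | 3 => (-cc,ss)
  | 4 => (-cc,-ss) | 5 => (-ss,-cc) | 6 => (ss,-cc) | 7 => (cc,-ss)

noncomputable def W : Fin 8 → ℝ × ℝ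
  | 0 => (cc,cc) | 1 => (0,cc+ss) | 2 => (-cc,cc) | 3 => (-(cc+ss),0)
  | 4 => (-cc,-cc) | 5 => (0,-(cc+ss)) | 6 => (cc,-cc) | 7 => (cc+ss,0)

lemma oct_eq_V : octVertex = V := by
  have h1 : cos (π/8) = cc ∧ sin (π/8) = ss := ⟨cos_pi_div_eight, sin_pi_div_eight⟩
  have h3 : cos (3*π/8) = ss ∧ sin (3*π/8) = cc := by
    rw [show (3*π/8 : ℝ) = π/2 - π/8 by ring, cos_pi_div_two_sub, sin_pi_div_two_sub]
    exact ⟨sin_pi_div_eight, cos_pi_div_eight⟩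
  have h5 : cos (5*π/8) = -ss ∧ sin (5*π/8) = cc := by
    rw [show (5*π/8 : ℝ) = π - 3*π/8 by ring, cos_pi_sub, sin_pi_sub, h3.1, h3.2]
    exact ⟨rfl, rfl⟩
  have h7 : cos (7*π/8) = -cc ∧ sin (7*π/8) = ss := by
    rw [show (7*π/8 : ℝ) = π - π/8 by ring, cos_pi_sub, sin_pi_sub, h1.1, h1.2]
    exact ⟨rfl, rfl⟩
  have h9 : cos (9*π/8) = -cc ∧ sin (9*π/8) = -ss := by
    rw [show (9*π/8 : ℝ) = 2*π - 7*π/8 by ring, cos_two_pi_sub, sin_two_pi_sub, h7.1, h7.2]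
    exact ⟨rfl, rfl⟩
  have h11 : cos (11*π/8) = -ss ∧ sin (11*π/8) = -cc := by
    rw [show (11*π/8 : ℝ) = 2*π - 5*π/8 by ring, cos_two_pi_sub, sin_two_pi_sub, h5.1, h5.2]
    exact ⟨rfl, rfl⟩
  have h13 : cos (13*π/8) = ss ∧ sin (13*π/8) = -cc := by
    rw [show (13*π/8 : ℝ) = 2*π - 3*π/8 by ring, cos_two_pi_sub, sin_two_pi_sub, h3.1, h3.2]
    exact ⟨rfl, rfl⟩
  have h15 : cos (15*π/8) = cc ∧ sin (15*π/8) = -ss := by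
    rw [show (15*π/8 : ℝ) = 2*π - π/8 by ring, cos_two_pi_sub, sin_two_pi_sub, h1.1, h1.2]
    exact ⟨rfl, rfl⟩
  funext i
  fin_cases i <;> simp only [octVertex, V]
  · norm_num; unfold cc ss; exact ⟨rfl, rfl⟩
  · norm_num; exact h3
  · norm_num; exact h5
  · norm_num; exact h7
  · norm_num; exact h9
  · norm_num; exact h11
  · norm_num; exact h13
  · norm_num; exact h15

lemma V_ne : ∀ {a b : Fin 8}, a ≠ b → V a ≠ V b := by
  intro a b hab
  fin_cases a <;> fin_cases b <;>
    first
      | (exact absurd rfl hab)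
      | (clear hab;
         simp only [V, ne_eq, Prod.mk.injEq, not_and];
         intro h h';
         linarith [ss_pos, cc_pos, ss_lt_cc])

set_option maxHeartbeats 1000000 in
lemma key_nonneg_0 (m k : Fin 8) :
    0 ≤ det2 (V ((0:Fin 8)+2) - ((2:ℝ)•W 0 - V m)) (V k - ((2:ℝ)•W 0 - V m)) := by
  fin_cases m <;> fin_cases k <;>
    simp [V, W, det2, Prod.ext_iff] <;>
    linarith [hone, htwo, hXlo, hXhi, ss_pos, cc_pos, ss_lt_cc]

set_option maxHeartbeats 1000000 in
lemma key_nonneg_1 (m k : Fin 8) :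
    0 ≤ det2 (V ((1:Fin 8)+2) - ((2:ℝ)•W 1 - V m)) (V k - ((2:ℝ)•W 1 - V m)) := by
  fin_cases m <;> fin_cases k <;>
    simp [V, W, det2, Prod.ext_iff] <;>
    linarith [hone, htwo, hXlo, hXhi, ss_pos, cc_pos, ss_lt_cc]

set_option maxHeartbeats 1000000 in
lemma key_nonneg_2 (m k : Fin 8) :
    0 ≤ det2 (V ((2:Fin 8)+2) - ((2:ℝ)•W 2 - V m)) (V k - ((2:ℝ)•W 2 - V m)) := by
  fin_cases m <;> fin_cases k <;>
    simp [V, W, det2, Prod.ext_iff] <;>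
    linarith [hone, htwo, hXlo, hXhi, ss_pos, cc_pos, ss_lt_cc]

set_option maxHeartbeats 1000000 in
lemma key_nonneg_3 (m k : Fin 8) :
    0 ≤ det2 (V ((3:Fin 8)+2) - ((2:ℝ)•W 3 - V m)) (V k - ((2:ℝ)•W 3 - V m)) := by
  fin_cases m <;> fin_cases k <;>
    simp [V, W, det2, Prod.ext_iff] <;>
    linarith [hone, htwo, hXlo, hXhi, ss_pos, cc_pos, ss_lt_cc]

set_option maxHeartbeats 1000000 in
lemma key_nonneg_4 (m k : Fin 8) :
    0 ≤ det2 (V ((4:Fin 8)+2) - ((2:ℝ)•W 4 - V m)) (V k - ((2:ℝ)•W 4 - V m)) := by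
  fin_cases m <;> fin_cases k <;>
    simp [V, W, det2, Prod.ext_iff] <;>
    linarith [hone, htwo, hXlo, hXhi, ss_pos, cc_pos, ss_lt_cc]

set_option maxHeartbeats 1000000 in
lemma key_nonneg_5 (m k : Fin 8) :
    0 ≤ det2 (V ((5:Fin 8)+2) - ((2:ℝ)•W 5 - V m)) (V k - ((2:ℝ)•W 5 - V m)) := by
  fin_cases m <;> fin_cases k <;>
    simp [V, W, det2, Prod.ext_iff] <;>
    linarith [hone, htwo, hXlo, hXhi, ss_pos, cc_pos, ss_lt_cc]

set_option maxHeartbeats 1000000 in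
lemma key_nonneg_6 (m k : Fin 8) :
    0 ≤ det2 (V ((6:Fin 8)+2) - ((2:ℝ)•W 6 - V m)) (V k - ((2:ℝ)•W 6 - V m)) := by
  fin_cases m <;> fin_cases k <;>
    simp [V, W, det2, Prod.ext_iff] <;>
    linarith [hone, htwo, hXlo, hXhi, ss_pos, cc_pos, ss_lt_cc]

set_option maxHeartbeats 1000000 in
lemma key_nonneg_7 (m k : Fin 8) :
    0 ≤ det2 (V ((7:Fin 8)+2) - ((2:ℝ)•W 7 - V m)) (V k - ((2:ℝ)•W 7 - V m)) := by
  fin_cases m <;> fin_cases k <;>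
    simp [V, W, det2, Prod.ext_iff] <;>
    linarith [hone, htwo, hXlo, hXhi, ss_pos, cc_pos, ss_lt_cc]

lemma key_nonneg (i m k : Fin 8) :
    0 ≤ det2 (V (i+2) - ((2:ℝ)•W i - V m)) (V k - ((2:ℝ)•W i - V m)) := by
  fin_cases i
  exacts [key_nonneg_0 m k, key_nonneg_1 m k, key_nonneg_2 m k, key_nonneg_3 m k,
    key_nonneg_4 m k, key_nonneg_5 m k, key_nonneg_6 m k, key_nonneg_7 m k]

lemma det2_self (u v : ℝ × ℝ) : det2 (u - v) (u - v) = 0 := by simp [det2]; ring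

lemma conv_half (a k : ℝ × ℝ) : Convex ℝ {p : ℝ × ℝ | 0 ≤ det2 (a - p) (k - p)} := by
  intro x hx y hy s t hs ht hst
  simp only [Set.mem_setOf_eq] at hx hy ⊢
  have ht' : t = 1 - s := by linarith
  subst ht'
  have key : det2 (a - (s • x + (1-s) • y)) (k - (s • x + (1-s) • y))
      = s * det2 (a - x) (k - x) + (1-s) * det2 (a - y) (k - y) := by
    simp only [det2, Prod.fst_add, Prod.snd_add, Prod.smul_fst, Prod.smul_snd, smul_eq_mul,
      Prod.fst_sub, Prod.snd_sub]
    ring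
  rw [key]
  have := mul_nonneg hs hx
  have := mul_nonneg ht hy
  linarith

lemma det2_pos_interior {S : Set (ℝ × ℝ)} {aj ak : ℝ × ℝ} (hne : ak ≠ aj)
    (hS : ∀ x ∈ S, 0 ≤ det2 (aj - x) (ak - x)) {p : ℝ × ℝ} (hp : p ∈ interior S) :
    0 < det2 (aj - p) (ak - p) := by
  obtain ⟨ε, hε, hball⟩ := Metric.mem_nhds_iff.mp (mem_interior_iff_mem_nhds.mp hp)
  set w : ℝ × ℝ := ak - aj with hw_def
  have hw : w ≠ 0 := sub_ne_zero.mpr hne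
  set v : ℝ × ℝ := (w.2, -w.1) with hv_def
  have hv : v ≠ 0 := by
    intro h
    apply hw
    have h1 : w.2 = 0 := congrArg Prod.fst h
    have h2 : -w.1 = 0 := congrArg Prod.snd h
    have : w.1 = 0 := by linarith
    exact Prod.ext_iff.mpr ⟨this, h1⟩
  have hvn : 0 < ‖v‖ := norm_pos_iff.mpr hv
  set t : ℝ := ε / (2 * ‖v‖) with ht_def
  have ht : 0 < t := by positivity
  have hq : p + t • v ∈ S := by
    apply hball
    rw [Metric.mem_ball, dist_eq_norm]
    have : p + t • v - p = t • v := by abel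
    rw [this, norm_smul, Real.norm_eq_abs, abs_of_pos ht, ht_def]
    have h2 : ε / (2 * ‖v‖) * ‖v‖ = ε / 2 := by field_simp
    rw [h2]
    linarith
  have hge := hS _ hq
  have hid : det2 (aj - (p + t • v)) (ak - (p + t • v))
      = det2 (aj - p) (ak - p) - t * (w.1^2 + w.2^2) := by
    simp only [det2, Prod.fst_sub, Prod.snd_sub, Prod.fst_add, Prod.snd_add, Prod.smul_fst,
      Prod.smul_snd, smul_eq_mul, hv_def, hw_def]
    ring
  have hwpos : 0 < w.1^2 + w.2^2 := by
    rcases Prod.mk.injEq .. ▸ (by exact fun h => hw (Prod.ext_iff.mpr h) : ¬(w.1 = 0 ∧ w.2 = 0)) with _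
    have : w.1 ≠ 0 ∨ w.2 ≠ 0 := by
      by_contra h
      push_neg at h
      exact hw (Prod.ext_iff.mpr ⟨h.1, h.2⟩)
    rcases this with h | h
    · positivity
    · positivity
  nlinarith [hid ▸ hge, mul_pos ht hwpos]

lemma det2_sum (p u : ℝ × ℝ) {ι : Type} (t : Finset ι) (w : ι → ℝ) (z : ι → ℝ × ℝ)
    (hw1 : ∑ i ∈ t, w i = 1) :
    det2 u (t.centerMass w z - p) = ∑ i ∈ t, w i * det2 u (z i - p) := by
  rw [Finset.centerMass_eq_of_sum_1 _ _ hw1]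
  have h1 : (∑ i ∈ t, w i • z i).1 = ∑ i ∈ t, w i * (z i).1 := by
    have h := map_sum (LinearMap.fst ℝ ℝ ℝ) (fun i => w i • z i) t
    simp only [LinearMap.fst_apply, Prod.smul_fst, smul_eq_mul] at h
    exact h
  have h2 : (∑ i ∈ t, w i • z i).2 = ∑ i ∈ t, w i * (z i).2 := by
    have h := map_sum (LinearMap.snd ℝ ℝ ℝ) (fun i => w i • z i) t
    simp only [LinearMap.snd_apply, Prod.smul_snd, smul_eq_mul] at h
    exact h
  have expand : ∀ i ∈ t, w i * det2 u (z i - p)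
      = (u.1 * (w i * (z i).2) - u.2 * (w i * (z i).1)) - w i * (u.1 * p.2 - u.2 * p.1) := by
    intro i _
    simp only [det2, Prod.fst_sub, Prod.snd_sub]
    ring
  rw [Finset.sum_congr rfl expand, Finset.sum_sub_distrib, Finset.sum_sub_distrib,
    ← Finset.mul_sum, ← Finset.mul_sum, ← Finset.sum_mul, hw1]
  simp only [det2, Prod.fst_sub, Prod.snd_sub, h1, h2]
  ring

noncomputable def reflA (c : ℝ × ℝ) : (ℝ × ℝ) →ᵃ[ℝ] (ℝ × ℝ) where
  toFun x := (2:ℝ) • c - x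
  linear := -LinearMap.id
  map_vadd' p v := by
    simp only [vadd_eq_add, LinearMap.neg_apply, LinearMap.id_apply]
    abel

lemma oct_hull : octagon = convexHull ℝ (Set.range V) := by rw [octagon, oct_eq_V]

lemma negV : ∀ m : Fin 8, -V m = V (m + 4) := by
  intro m
  fin_cases m
  · show -V 0 = V (0+4); norm_num [V, Prod.ext_iff]
  · show -V 1 = V 5; norm_num [V, Prod.ext_iff]
  · show -V 2 = V 6; norm_num [V, Prod.ext_iff]
  · show -V 3 = V 7; norm_num [V, Prod.ext_iff]
  · show -V 4 = V 0; norm_num [V, Prod.ext_iff]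
  · show -V 5 = V 1; norm_num [V, Prod.ext_iff]
  · show -V 6 = V 2; norm_num [V, Prod.ext_iff]
  · show -V 7 = V 3; norm_num [V, Prod.ext_iff]

lemma neg_range : (fun x : ℝ × ℝ => -x) '' Set.range V = Set.range V := by
  rw [← Set.range_comp]
  have : ((fun x : ℝ × ℝ => -x) ∘ V) = V ∘ (fun m : Fin 8 => m + 4) := by
    funext m
    exact negV m
  rw [this]
  apply Function.Surjective.range_comp
  intro b
  exact ⟨b - 4, by simp⟩

lemma neg_oct : (fun x : ℝ × ℝ => -x) '' octagon = octagon := by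
  rw [oct_hull]
  have h := (reflA 0).image_convexHull (Set.range V)
  have he : ⇑(reflA 0) = (fun x : ℝ × ℝ => -x) := by
    funext x
    show (2:ℝ) • (0 : ℝ × ℝ) - x = -x
    simp
  rw [he] at h
  rw [h, neg_range]

lemma gamma_hull (c : ℝ × ℝ) :
    (fun x => (2:ℝ) • c - x) '' octagon
      = convexHull ℝ (Set.range (fun m => (2:ℝ) • c - V m)) := by
  rw [oct_hull]
  have h := (reflA c).image_convexHull (Set.range V)
  have he : ⇑(reflA c) = (fun x : ℝ × ℝ => (2:ℝ) • c - x) := rfl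
  rw [he] at h
  rw [h, ← Set.range_comp]
  rfl

lemma gamma_sub_half (i k : Fin 8) :
    ((fun x => (2:ℝ) • W i - x) '' octagon)
      ⊆ {p : ℝ × ℝ | 0 ≤ det2 (V (i+2) - p) (V k - p)} := by
  rw [gamma_hull]
  apply convexHull_min
  · rintro _ ⟨m, rfl⟩
    exact key_nonneg i m k
  · exact conv_half _ _

lemma WW (i : Fin 8) : W i + W (i + 3) = V (i + 2) := by
  fin_cases i
  · show W 0 + W (0+3) = V (0+2); norm_num [V, W, Prod.ext_iff]
  · show W 1 + W 4 = V 3; norm_num [V, W, Prod.ext_iff]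
  · show W 2 + W 5 = V 4; norm_num [V, W, Prod.ext_iff]
  · show W 3 + W 6 = V 5; norm_num [V, W, Prod.ext_iff]
  · show W 4 + W 7 = V 6; norm_num [V, W, Prod.ext_iff]
  · show W 5 + W 0 = V 7; norm_num [V, W, Prod.ext_iff]
  · show W 6 + W 1 = V 0; norm_num [V, W, Prod.ext_iff]
  · show W 7 + W 2 = V 1; norm_num [V, W, Prod.ext_iff]

noncomputable def reflHomeo (a : ℝ × ℝ) : (ℝ × ℝ) ≃ₜ (ℝ × ℝ) where
  toFun x := a - x
  invFun x := a - x
  left_inv x := sub_sub_cancel a x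
  right_inv x := sub_sub_cancel a x
  continuous_toFun := continuous_const.sub continuous_id
  continuous_invFun := continuous_const.sub continuous_id

lemma mem_span_pair {p q v : ℝ × ℝ} (hne : p ≠ q) (h : det2 (q - p) (v - p) = 0) :
    v ∈ affineSpan ℝ ({p, q} : Set (ℝ × ℝ)) := by
  simp only [det2, Prod.fst_sub, Prod.snd_sub] at h
  by_cases h1 : q.1 - p.1 = 0
  · have h2 : q.2 - p.2 ≠ 0 := by
      intro h2
      exact hne (Prod.ext_iff.mpr ⟨by linarith, by linarith⟩)
    rw [h1, zero_mul, zero_sub, neg_eq_zero] at h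
    have hc1 : v.1 = p.1 := by
      rcases mul_eq_zero.mp h with hh | hh
      · exact absurd hh h2
      · linarith
    have hv : v = AffineMap.lineMap p q ((v.2 - p.2) / (q.2 - p.2)) := by
      rw [AffineMap.lineMap_apply_module']
      refine Prod.ext_iff.mpr ⟨?_, ?_⟩
      · simp only [Prod.fst_add, Prod.smul_fst, Prod.fst_sub, smul_eq_mul]
        rw [h1, hc1]; ring
      · simp only [Prod.snd_add, Prod.smul_snd, Prod.snd_sub, smul_eq_mul]
        field_simp; ring
    rw [hv]
    exact AffineMap.lineMap_mem_affineSpan_pair _ _ _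
  · have hv : v = AffineMap.lineMap p q ((v.1 - p.1) / (q.1 - p.1)) := by
      rw [AffineMap.lineMap_apply_module']
      refine Prod.ext_iff.mpr ⟨?_, ?_⟩
      · simp only [Prod.fst_add, Prod.smul_fst, Prod.fst_sub, smul_eq_mul]
        field_simp; ring
      · simp only [Prod.snd_add, Prod.smul_snd, Prod.snd_sub, smul_eq_mul]
        rw [div_mul_eq_mul_div, eq_comm, div_add' _ _ _ h1, div_eq_iff h1]
        linear_combination -h
    rw [hv]
    exact AffineMap.lineMap_mem_affineSpan_pair _ _ _

lemma fin_sub_one_ne : ∀ i : Fin 8, i - 1 ≠ i := by decide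
lemma fin_add_one_ne : ∀ i : Fin 8, i + 1 ≠ i + 2 := by decide
lemma fin_succ_ne : ∀ i : Fin 8, i + 1 ≠ i := by decide
lemma fin_sub_add : ∀ i : Fin 8, i - 1 + 1 = i := by decide
lemma fin_add_add : ∀ i : Fin 8, i + 1 + 1 = i + 2 := by decide

lemma lineDetA : ∀ i : Fin 8, det2 (V i - V (i - 1)) (W i - V (i - 1)) = 0 := by
  intro i
  fin_cases i
  · show det2 (V 0 - V 7) (W 0 - V 7) = 0; norm_num [V, W, det2] <;> ring
  · show det2 (V 1 - V 0) (W 1 - V 0) = 0; norm_num [V, W, det2] <;> ring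
  · show det2 (V 2 - V 1) (W 2 - V 1) = 0; norm_num [V, W, det2] <;> ring
  · show det2 (V 3 - V 2) (W 3 - V 2) = 0; norm_num [V, W, det2] <;> ring
  · show det2 (V 4 - V 3) (W 4 - V 3) = 0; norm_num [V, W, det2] <;> ring
  · show det2 (V 5 - V 4) (W 5 - V 4) = 0; norm_num [V, W, det2] <;> ring
  · show det2 (V 6 - V 5) (W 6 - V 5) = 0; norm_num [V, W, det2] <;> ring
  · show det2 (V 7 - V 6) (W 7 - V 6) = 0; norm_num [V, W, det2] <;> ring

lemma lineDetB : ∀ i : Fin 8, det2 (V (i + 2) - V (i + 1)) (W i - V (i + 1)) = 0 := by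
  intro i
  fin_cases i
  · show det2 (V 2 - V 1) (W 0 - V 1) = 0; norm_num [V, W, det2] <;> ring
  · show det2 (V 3 - V 2) (W 1 - V 2) = 0; norm_num [V, W, det2] <;> ring
  · show det2 (V 4 - V 3) (W 2 - V 3) = 0; norm_num [V, W, det2] <;> ring
  · show det2 (V 5 - V 4) (W 3 - V 4) = 0; norm_num [V, W, det2] <;> ring
  · show det2 (V 6 - V 5) (W 4 - V 5) = 0; norm_num [V, W, det2] <;> ring
  · show det2 (V 7 - V 6) (W 5 - V 6) = 0; norm_num [V, W, det2] <;> ring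
  · show det2 (V 0 - V 7) (W 6 - V 7) = 0; norm_num [V, W, det2] <;> ring
  · show det2 (V 1 - V 0) (W 7 - V 0) = 0; norm_num [V, W, det2] <;> ring

lemma mem_lineA (i : Fin 8) : W i ∈ affineSpan ℝ ({V (i - 1), V i} : Set (ℝ × ℝ)) :=
  mem_span_pair (V_ne (fin_sub_one_ne i)) (lineDetA i)

lemma mem_lineB (i : Fin 8) : W i ∈ affineSpan ℝ ({V (i + 1), V (i + 2)} : Set (ℝ × ℝ)) :=
  mem_span_pair (V_ne (fin_add_one_ne i)) (lineDetB i)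

theorem outer_billiard_maps_necklace
    (C : Fin 8 → ℝ × ℝ)
    (hC : ∀ i : Fin 8, octLine (i - 1) ∩ octLine (i + 1) = {C i})
    (Γ : Fin 8 → Set (ℝ × ℝ))
    (hΓ : ∀ i, Γ i = (fun x => (2 : ℝ) • C i - x) '' octagon)
    (T : ℝ × ℝ → ℝ × ℝ)
    (hT : ∀ j : Fin 8, ∀ p ∈ tangentRegion j, T p = (2 : ℝ) • octVertex j - p) :
    ∀ i : Fin 8, ∃ j : Fin 8, interior (Γ i) ⊆ tangentRegion j ∧
      T '' interior (Γ i) = interior (Γ (i + 3)) := by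
  have hAj : ∀ i : Fin 8, octVertex i = V i := fun i => by rw [oct_eq_V]
  have hCW : ∀ i : Fin 8, C i = W i := by
    intro i
    have h := hC i
    have hm : W i ∈ octLine (i - 1) ∩ octLine (i + 1) := by
      constructor
      · show W i ∈ (affineSpan ℝ {octVertex (i-1), octVertex (i-1+1)} : AffineSubspace ℝ (ℝ × ℝ))
        rw [oct_eq_V, fin_sub_add i]
        exact mem_lineA i
      · show W i ∈ (affineSpan ℝ {octVertex (i+1), octVertex (i+1+1)} : AffineSubspace ℝ (ℝ × ℝ))
        rw [oct_eq_V, fin_add_add i]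
        exact mem_lineB i
    rw [h] at hm
    exact (Set.eq_of_mem_singleton hm).symm
  intro i
  have hΓi : Γ i = (fun x => (2:ℝ) • W i - x) '' octagon := by rw [hΓ i, hCW i]
  have hsubΓ : ∀ k : Fin 8, ∀ x ∈ Γ i, 0 ≤ det2 (V (i+2) - x) (V k - x) := by
    intro k x hx
    exact gamma_sub_half i k (hΓi ▸ hx)
  have hpos : ∀ p ∈ interior (Γ i), ∀ k : Fin 8, k ≠ i + 2 →
      0 < det2 (V (i+2) - p) (V k - p) := by
    intro p hp k hk
    exact det2_pos_interior (V_ne hk) (hsubΓ k) hp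
  have hqpos : ∀ p ∈ interior (Γ i), ∀ q ∈ octagon, q ≠ V (i+2) →
      0 < det2 (V (i+2) - p) (q - p) := by
    intro p hp q hq hqne
    rw [oct_hull, convexHull_eq] at hq
    obtain ⟨ι, t, w, z, hw0, hw1, hz, hcm⟩ := hq
    have hD : det2 (V (i+2) - p) (q - p) = ∑ x ∈ t, w x * det2 (V (i+2) - p) (z x - p) := by
      rw [← hcm]
      exact det2_sum p _ t w z hw1
    have hterm : ∀ x ∈ t, 0 ≤ w x * det2 (V (i+2) - p) (z x - p) := by
      intro x hx
      obtain ⟨k, hk⟩ := hz x hx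
      rcases eq_or_ne k (i+2) with h | h
      · rw [← hk, h, det2_self]
        simp
      · exact mul_nonneg (hw0 x hx) (le_of_lt (hk ▸ hpos p hp k h))
    have hex : ∃ x ∈ t, 0 < w x * det2 (V (i+2) - p) (z x - p) := by
      by_contra hcon
      push_neg at hcon
      apply hqne
      have hz' : ∀ x ∈ t, w x • z x = w x • V (i+2) := by
        intro x hx
        rcases eq_or_lt_of_le (hw0 x hx) with h0 | h0
        · rw [← h0, zero_smul, zero_smul]
        · obtain ⟨k, hk⟩ := hz x hx
          rcases eq_or_ne k (i+2) with h | h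
          · rw [← hk, h]
          · exact absurd (mul_pos h0 (hk ▸ hpos p hp k h)) (not_lt.mpr (hcon x hx))
      rw [← hcm, Finset.centerMass_eq_of_sum_1 _ _ hw1, Finset.sum_congr rfl hz',
        ← Finset.sum_smul, hw1, one_smul]
    rw [hD]
    exact Finset.sum_pos' hterm hex
  have hsub : interior (Γ i) ⊆ tangentRegion (i + 2) := by
    intro p hp
    refine ⟨?_, ?_⟩
    · intro hpo
      by_cases hpj : p = V (i+2)
      · have h := hpos p hp (i+2+1) (fin_succ_ne (i+2))
        rw [hpj] at h
        simp [det2, sub_self] at h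
      · have h := hqpos p hp p hpo hpj
        simp [det2, sub_self] at h
    · intro q hq hqne
      rw [hAj (i+2)]
      exact hqpos p hp q hq (by rwa [hAj (i+2)] at hqne)
  refine ⟨i + 2, hsub, ?_⟩
  have himg : T '' interior (Γ i) = (fun p => (2:ℝ) • V (i+2) - p) '' interior (Γ i) := by
    apply Set.image_congr
    intro p hp
    rw [hT (i+2) p (hsub hp), hAj (i+2)]
  have hre : (fun p : ℝ × ℝ => (2:ℝ) • V (i+2) - p) = ⇑(reflHomeo ((2:ℝ) • V (i+2))) := rfl
  rw [himg, hre, (reflHomeo ((2:ℝ) • V (i+2))).image_interior]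
  congr 1
  rw [hΓ i, hΓ (i+3), hCW i, hCW (i+3), ← Set.image_comp]
  have hcomp : (⇑(reflHomeo ((2:ℝ) • V (i+2))) ∘ fun x => (2:ℝ) • W i - x)
      = fun x : ℝ × ℝ => (2:ℝ) • W (i+3) + x := by
    funext x
    show (2:ℝ) • V (i+2) - ((2:ℝ) • W i - x) = (2:ℝ) • W (i+3) + x
    have h2 : (2:ℝ) • V (i+2) = (2:ℝ) • W i + (2:ℝ) • W (i+3) := by
      rw [← smul_add, WW i]
    rw [h2]
    abel
  have hneg : (fun x : ℝ × ℝ => (2:ℝ) • W (i+3) - x) '' octagon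
      = (fun x : ℝ × ℝ => (2:ℝ) • W (i+3) + x) '' octagon := by
    conv_lhs => rw [← neg_oct, ← Set.image_comp]
    apply Set.image_congr'
    intro y
    show (2:ℝ) • W (i+3) - (-y) = (2:ℝ) • W (i+3) + y
    rw [sub_neg_eq_add]
  rw [hcomp, hneg]
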